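/- Let u_1,...,u_n ∈ R^d be the rows of an n×d matrix U whose columns are orthonormal (equivalently Σ_i u_i ⊗ u_i = I_d). Then the n×n matrix H with H_jj = |u_j|^2 − |u_j|^4 and H_jk = −⟨u_j,u_k⟩^2 for j ≠ k satisfies H·1 = 0 and has spectral norm at most 1/2 (i.e., y^T H y ≤ |y|^2/2 for all y ∈ R^n). -/

import Mathlib

open Matrix

/-- If `u 1, ..., u n ∈ ℝ^d` are the rows of a matrix with orthonormal columns
(equivalently `∑ i, u i ⊗ u i = I_d`), then the matrix `H` with
`H j j = |u j|² - |u j|⁴` and `H j k = -⟨u j, u k⟩²` for `j ≠ k` satisfies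
`H · 1 = 0` and `yᵀ H y ≤ |y|² / 2` for all `y`. -/
theorem stmt13 {d n : ℕ} (u : Fin n → Fin d → ℝ)
    (horth : ∑ i, Matrix.vecMulVec (u i) (u i) = (1 : Matrix (Fin d) (Fin d) ℝ))
    (H : Matrix (Fin n) (Fin n) ℝ)
    (hH : ∀ j k, H j k =
      if j = k then (u j ⬝ᵥ u j) - (u j ⬝ᵥ u j) ^ 2 else -(u j ⬝ᵥ u k) ^ 2) :
    H.mulVec (fun _ => 1) = 0 ∧ ∀ y : Fin n → ℝ, y ⬝ᵥ H.mulVec y ≤ (y ⬝ᵥ y) / 2 := by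
  have hE : ∀ p q, ∑ i, u i p * u i q = if p = q then (1:ℝ) else 0 := by
    intro p q
    have h := congrFun (congrFun horth p) q
    simpa [Matrix.sum_apply, Matrix.vecMulVec_apply, Matrix.one_apply] using h
  have hsum : ∀ j, ∑ k, (u j ⬝ᵥ u k)^2 = u j ⬝ᵥ u j := by
    intro j
    have h1 : ∀ k : Fin n, (u j ⬝ᵥ u k)^2 = ∑ p, ∑ q, (u j p * u j q) * (u k p * u k q) := by
      intro k
      rw [dotProduct, sq, Finset.sum_mul_sum]
      exact Finset.sum_congr rfl fun p _ => Finset.sum_congr rfl fun q _ => by ring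
    calc ∑ k, (u j ⬝ᵥ u k)^2
        = ∑ k, ∑ p, ∑ q, (u j p * u j q) * (u k p * u k q) :=
          Finset.sum_congr rfl fun k _ => h1 k
      _ = ∑ p, ∑ q, (u j p * u j q) * (∑ k, u k p * u k q) := by
          rw [Finset.sum_comm]
          refine Finset.sum_congr rfl fun p _ => ?_
          rw [Finset.sum_comm]
          exact Finset.sum_congr rfl fun q _ => (Finset.mul_sum _ _ _).symm
      _ = u j ⬝ᵥ u j := by
          simp_rw [hE, mul_ite, mul_one, mul_zero, Finset.sum_ite_eq, Finset.mem_univ,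
            if_pos, dotProduct]
  have hHerase : ∀ j, ∑ k ∈ Finset.univ.erase j, H j k =
      -((u j ⬝ᵥ u j) - (u j ⬝ᵥ u j)^2) := by
    intro j
    have h3 := Finset.sum_erase_add Finset.univ (fun k => (u j ⬝ᵥ u k)^2) (Finset.mem_univ j)
    rw [hsum j] at h3
    have h4 : ∑ k ∈ Finset.univ.erase j, H j k =
        -∑ k ∈ Finset.univ.erase j, (u j ⬝ᵥ u k)^2 := by
      rw [← Finset.sum_neg_distrib]
      refine Finset.sum_congr rfl fun k hk => ?_
      rw [hH j k, if_neg (Ne.symm (Finset.mem_erase.mp hk).1)]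
    rw [h4]
    have : (u j ⬝ᵥ u j) ^ 2 = (fun k => (u j ⬝ᵥ u k)^2) j := rfl
    nlinarith [h3]
  constructor
  · funext j
    simp only [Matrix.mulVec, dotProduct, mul_one, Pi.zero_apply]
    have h5 := Finset.sum_erase_add Finset.univ (fun k => H j k) (Finset.mem_univ j)
    rw [hHerase j, hH j j, if_pos rfl] at h5
    linarith [h5]
  · intro y
    have hy : y ⬝ᵥ H.mulVec y = ∑ j, ∑ k, y j * (H j k * y k) := by
      simp [Matrix.mulVec, dotProduct, Finset.mul_sum]
    set B : Fin n → Fin n → ℝ := fun j k =>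
      (u j ⬝ᵥ u k)^2 * (y j^2 + y k^2)/2 +
      (if j = k then (u j ⬝ᵥ u j - (u j ⬝ᵥ u j)^2) * y j^2 - (u j ⬝ᵥ u j)^2 * y j^2 else 0)
      with hBdef
    have hb : ∀ j k, y j * (H j k * y k) ≤ B j k := by
      intro j k
      rw [hH j k]
      by_cases h : j = k
      · subst h
        simp only [hBdef, eq_self_iff_true, if_true]
        exact le_of_eq (by ring)
      · simp only [hBdef, if_neg h, add_zero]
        nlinarith [mul_nonneg (sq_nonneg (u j ⬝ᵥ u k)) (sq_nonneg (y j + y k))]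
    have hswap : ∑ j, ∑ k, (u j ⬝ᵥ u k)^2 * y k^2 = ∑ j, (u j ⬝ᵥ u j) * y j^2 := by
      rw [Finset.sum_comm]
      refine Finset.sum_congr rfl fun k _ => ?_
      rw [← Finset.sum_mul]
      congr 1
      calc ∑ j, (u j ⬝ᵥ u k)^2 = ∑ j, (u k ⬝ᵥ u j)^2 := by
            simp_rw [dotProduct_comm]
        _ = u k ⬝ᵥ u k := hsum k
    have hBsum : ∑ j, ∑ k, B j k = ∑ j, (2*(u j ⬝ᵥ u j) - 2*(u j ⬝ᵥ u j)^2) * y j^2 := by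
      have hs1 : ∀ j, ∑ k, B j k =
          (u j ⬝ᵥ u j) * y j^2/2 + (∑ k, (u j ⬝ᵥ u k)^2 * y k^2)/2 +
          ((u j ⬝ᵥ u j - (u j ⬝ᵥ u j)^2) * y j^2 - (u j ⬝ᵥ u j)^2 * y j^2) := by
        intro j
        simp only [hBdef]
        rw [Finset.sum_add_distrib]
        congr 1
        · have he : ∀ k : Fin n, (u j ⬝ᵥ u k)^2 * (y j^2 + y k^2)/2 =
              (u j ⬝ᵥ u k)^2 * y j^2/2 + (u j ⬝ᵥ u k)^2 * y k^2/2 := fun k => by ring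
          simp_rw [he]
          rw [Finset.sum_add_distrib, ← Finset.sum_div, ← Finset.sum_div, ← Finset.sum_mul,
            hsum j]
        · simp [Finset.sum_ite_eq]
      have h6 : ∑ j, (∑ k, (u j ⬝ᵥ u k)^2 * y k^2)/2 = (∑ j, (u j ⬝ᵥ u j) * y j^2)/2 := by
        rw [← Finset.sum_div, hswap]
      simp_rw [hs1]
      rw [Finset.sum_add_distrib, Finset.sum_add_distrib, h6, ← Finset.sum_div, add_halves,
        ← Finset.sum_add_distrib]
      exact Finset.sum_congr rfl fun j _ => by ring
    calc y ⬝ᵥ H.mulVec y = ∑ j, ∑ k, y j * (H j k * y k) := hy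
      _ ≤ ∑ j, ∑ k, B j k :=
          Finset.sum_le_sum fun j _ => Finset.sum_le_sum fun k _ => hb j k
      _ = ∑ j, (2*(u j ⬝ᵥ u j) - 2*(u j ⬝ᵥ u j)^2) * y j^2 := hBsum
      _ ≤ ∑ j, y j * y j / 2 := by
          refine Finset.sum_le_sum fun j _ => ?_
          nlinarith [sq_nonneg (2*(u j ⬝ᵥ u j) - 1), sq_nonneg (y j)]
      _ = (y ⬝ᵥ y) / 2 := by rw [dotProduct, Finset.sum_div]
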